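/- Let p, q ∈ (0, 1) with p² + q² = 1, and let y ∈ ℂ satisfy p(1 − y²) + 2iy ≠ 0 and p(1 − y²) − 2iy ≠ 0. Then q² · cos( arg( (p(1 − y²) + 2iy) / (p(1 − y²) − 2iy) ) ) + cosh( ln( |p(1 + y²) − 2iqy| / |p(1 + y²) + 2iqy| ) ) − p² · cosh( ln( |(1 + y²) + q(1 − y²)| / |(1 + y²) − q(1 − y²)| ) ) = 0, all divisions being well defined since (p(1 − y²) + 2iy)(p(1 − y²) − 2iy) = (1 + y²)² − q²(1 − y²)² ≠ 0 implies p(1 + y²) ± 2iqy ≠ 0 and (1 + y²) ± q(1 − y²) ≠ 0. (Paper: implicit representation (impl2hyp), case p < 1, of the maximal surface dual to the 2-sheeted hyperboloid: q² cos px*₁ + cosh pqx*₂ − p² cosh qx*₃ = 0, evaluated pointwise in the Weierstrass data y.) -/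

import Mathlib

/-- **Implicit representation (impl2hyp), case p < 1, of the maximal surface dual to the
2-sheeted hyperboloid**, evaluated pointwise in the Kobayashi–Weierstrass data `y`:
`q² cos px*₁ + cosh pqx*₂ − p² cosh qx*₃ = 0`. -/
theorem maximal_surface_implicit
    (p q : ℝ) (hp : p ∈ Set.Ioo (0 : ℝ) 1) (hq : q ∈ Set.Ioo (0 : ℝ) 1)
    (hpq : p ^ 2 + q ^ 2 = 1)
    (y : ℂ)
    (h₁ : (p : ℂ) * (1 - y ^ 2) + 2 * Complex.I * y ≠ 0)
    (h₂ : (p : ℂ) * (1 - y ^ 2) - 2 * Complex.I * y ≠ 0) :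
    q ^ 2 * Real.cos (Complex.arg
        (((p : ℂ) * (1 - y ^ 2) + 2 * Complex.I * y) /
          ((p : ℂ) * (1 - y ^ 2) - 2 * Complex.I * y)))
      + Real.cosh (Real.log
          (‖(p : ℂ) * (1 + y ^ 2) - 2 * Complex.I * (q : ℂ) * y‖ /
            ‖(p : ℂ) * (1 + y ^ 2) + 2 * Complex.I * (q : ℂ) * y‖))
      - p ^ 2 * Real.cosh (Real.log
          (‖(1 + y ^ 2) + (q : ℂ) * (1 - y ^ 2)‖ /
            ‖(1 + y ^ 2) - (q : ℂ) * (1 - y ^ 2)‖)) = 0 := by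
  set A : ℂ := (p : ℂ) * (1 - y ^ 2) + 2 * Complex.I * y with hA
  set B : ℂ := (p : ℂ) * (1 - y ^ 2) - 2 * Complex.I * y with hB
  set C : ℂ := (p : ℂ) * (1 + y ^ 2) - 2 * Complex.I * (q : ℂ) * y with hC
  set D : ℂ := (p : ℂ) * (1 + y ^ 2) + 2 * Complex.I * (q : ℂ) * y with hD
  set E : ℂ := (1 + y ^ 2) + (q : ℂ) * (1 - y ^ 2) with hE
  set F : ℂ := (1 + y ^ 2) - (q : ℂ) * (1 - y ^ 2) with hF
  have hpq' : (p : ℂ) ^ 2 + (q : ℂ) ^ 2 = 1 := by exact_mod_cast congrArg (Complex.ofReal) hpq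
  have hCD : C * D = A * B := by
    rw [hA, hB, hC, hD]
    linear_combination (4 * y ^ 2) * hpq' + (4 * y ^ 2 * (1 - (q:ℂ) ^ 2)) * Complex.I_sq
  have hEF : E * F = A * B := by
    rw [hA, hB, hE, hF]
    linear_combination (-(1 - y ^ 2) ^ 2) * hpq' + (4 * y ^ 2) * Complex.I_sq
  have hAB : A * B ≠ 0 := mul_ne_zero h₁ h₂
  have hCn : C ≠ 0 := left_ne_zero_of_mul (hCD ▸ hAB)
  have hDn : D ≠ 0 := right_ne_zero_of_mul (hCD ▸ hAB)
  have hEn : E ≠ 0 := left_ne_zero_of_mul (hEF ▸ hAB)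
  have hFn : F ≠ 0 := right_ne_zero_of_mul (hEF ▸ hAB)
  have habsA : (0 : ℝ) < ‖A‖ := norm_pos_iff.mpr h₁
  have habsB : (0 : ℝ) < ‖B‖ := norm_pos_iff.mpr h₂
  have habsC : (0 : ℝ) < ‖C‖ := norm_pos_iff.mpr hCn
  have habsD : (0 : ℝ) < ‖D‖ := norm_pos_iff.mpr hDn
  have habsE : (0 : ℝ) < ‖E‖ := norm_pos_iff.mpr hEn
  have habsF : (0 : ℝ) < ‖F‖ := norm_pos_iff.mpr hFn
  set k : ℝ := ‖A * B‖ with hk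
  have hkpos : (0 : ℝ) < k := norm_pos_iff.mpr hAB
  have hkCD : ‖C‖ * ‖D‖ = k := by rw [hk, ← hCD, norm_mul]
  have hkEF : ‖E‖ * ‖F‖ = k := by rw [hk, ← hEF, norm_mul]
  have hkAB : ‖A‖ * ‖B‖ = k := by rw [hk, norm_mul]
  -- cosine term
  have hcos : Real.cos (Complex.arg (A / B)) =
      (A.re * B.re + A.im * B.im) / k := by
    rw [Complex.cos_arg (div_ne_zero h₁ h₂), Complex.div_re, norm_div]
    rw [← hkAB, ← Complex.sq_norm B]
    field_simp
  -- first cosh term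
  have hcosh1 : Real.cosh (Real.log (‖C‖ / ‖D‖)) =
      ((‖C‖) ^ 2 + (‖D‖) ^ 2) / (2 * k) := by
    rw [Real.cosh_log (div_pos habsC habsD), ← hkCD]
    field_simp
  -- second cosh term
  have hcosh2 : Real.cosh (Real.log (‖E‖ / ‖F‖)) =
      ((‖E‖) ^ 2 + (‖F‖) ^ 2) / (2 * k) := by
    rw [Real.cosh_log (div_pos habsE habsF), ← hkEF]
    field_simp
  rw [hcos, hcosh1, hcosh2]
  have key : 2 * q ^ 2 * (A.re * B.re + A.im * B.im)
      + ((‖C‖) ^ 2 + (‖D‖) ^ 2)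
      - p ^ 2 * ((‖E‖) ^ 2 + (‖F‖) ^ 2) = 0 := by
    simp only [Complex.sq_norm, Complex.normSq_apply, hA, hB, hC, hD, hE, hF,
      Complex.add_re, Complex.add_im, Complex.sub_re, Complex.sub_im,
      Complex.mul_re, Complex.mul_im, Complex.one_re, Complex.one_im,
      Complex.I_re, Complex.I_im, Complex.ofReal_re, Complex.ofReal_im,
      Complex.re_ofNat, Complex.im_ofNat]
    ring
  have hcomb : q ^ 2 * ((A.re * B.re + A.im * B.im) / k)
      + ((‖C‖) ^ 2 + (‖D‖) ^ 2) / (2 * k)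
      - p ^ 2 * (((‖E‖) ^ 2 + (‖F‖) ^ 2) / (2 * k))
      = (2 * q ^ 2 * (A.re * B.re + A.im * B.im)
          + ((‖C‖) ^ 2 + (‖D‖) ^ 2)
          - p ^ 2 * ((‖E‖) ^ 2 + (‖F‖) ^ 2)) / (2 * k) := by
    field_simp
  rw [hcomb, key, zero_div]
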